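/- arXiv:1804.00853 — 2 statements merged into one kernel-verified Lean document; each statement's English description precedes it below -/
import Mathlib

section
/- If σ : [0,∞) → [0,∞) is a C² convex function with σ(0) = σ'(0) = 0 and σ' concave, then for all x, y > 0 one has x·σ'(y) ≤ σ(x) + σ(y). -/
theorem stmt_1 (σ : ℝ → ℝ) (hC2 : ContDiff ℝ 2 σ)
    (hconv : ConvexOn ℝ (Set.Ici 0) σ)
    (hnonneg : ∀ x ∈ Set.Ici (0:ℝ), 0 ≤ σ x)
    (h0 : σ 0 = 0) (h0' : deriv σ 0 = 0)
    (hconc : ConcaveOn ℝ (Set.Ici 0) (deriv σ)) :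
    ∀ x > (0:ℝ), ∀ y > (0:ℝ), x * deriv σ y ≤ σ x + σ y := by
  have hdiff : ∀ z : ℝ, DifferentiableAt ℝ σ z := fun z =>
    (hC2.differentiable (by norm_num)).differentiableAt
  have hderiv_cont : Continuous (deriv σ) := hC2.continuous_deriv (by norm_num)
  intro x hx y hy
  -- Step 1: tangent line inequality: deriv σ y * (x - y) ≤ σ x - σ y
  have tangent : deriv σ y * (x - y) ≤ σ x - σ y := by
    rcases lt_trichotomy x y with h | h | h
    · have h1 := hconv.slope_le_deriv hx.le hy.le h (hdiff y)
      rw [slope_def_field] at h1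
      have h2 : σ y - σ x ≤ deriv σ y * (y - x) := by
        have hyx : (0:ℝ) < y - x := by linarith
        calc σ y - σ x = (σ y - σ x) / (y - x) * (y - x) := by field_simp
          _ ≤ deriv σ y * (y - x) := mul_le_mul_of_nonneg_right h1 hyx.le
      nlinarith
    · simp [h]
    · have h1 := hconv.deriv_le_slope hy.le hx.le h (hdiff y)
      rw [slope_def_field] at h1
      have hxy : (0:ℝ) < x - y := by linarith
      calc deriv σ y * (x - y) ≤ (σ x - σ y) / (x - y) * (x - y) :=
            mul_le_mul_of_nonneg_right h1 hxy.le
        _ = σ x - σ y := by field_simp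
  -- Step 2: y * deriv σ y ≤ 2 * σ y
  have key2 : y * deriv σ y ≤ 2 * σ y := by
    have hFTC : ∫ t in (0:ℝ)..y, deriv σ t = σ y - σ 0 :=
      intervalIntegral.integral_deriv_eq_sub (fun t _ => hdiff t)
        (hderiv_cont.intervalIntegrable 0 y)
    have hlower : ∀ t ∈ Set.Icc (0:ℝ) y, deriv σ y / y * t ≤ deriv σ t := by
      intro t ht
      have hty : t / y ∈ Set.Icc (0:ℝ) 1 :=
        ⟨div_nonneg ht.1 hy.le, (div_le_one hy).mpr ht.2⟩
      have := hconc.2 (Set.self_mem_Ici) (Set.mem_Ici.mpr hy.le)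
        (by linarith [hty.1, hty.2] : (0:ℝ) ≤ 1 - t / y) hty.1 (by ring)
      simp only [smul_eq_mul, h0', mul_zero, zero_add] at this
      have ht' : t / y * y = t := by field_simp
      rw [ht'] at this
      calc deriv σ y / y * t = t / y * deriv σ y := by ring
        _ ≤ deriv σ t := this
    have hmono : ∫ t in (0:ℝ)..y, deriv σ y / y * t ≤ ∫ t in (0:ℝ)..y, deriv σ t := by
      apply intervalIntegral.integral_mono_on hy.le
      · exact (continuous_const.mul continuous_id).intervalIntegrable 0 y
      · exact hderiv_cont.intervalIntegrable 0 y
      · exact hlower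
    have hval : ∫ t in (0:ℝ)..y, deriv σ y / y * t = deriv σ y / y * (y ^ 2 / 2) := by
      rw [intervalIntegral.integral_const_mul, integral_id]
      ring_nf
    rw [hval, hFTC, h0, sub_zero] at hmono
    have heq : deriv σ y / y * (y ^ 2 / 2) = y * deriv σ y / 2 := by
      field_simp
    linarith [heq ▸ hmono]
  have hsplit : x * deriv σ y = deriv σ y * (x - y) + y * deriv σ y := by ring
  linarith
end

section
/- If σ : [0,∞) → [0,∞) is a C² convex function with σ(0) = σ'(0) = 0 and σ' concave, then for all x, y > 0 one has 0 ≤ σ(x+y) − σ(x) − σ(y) ≤ 2(x·σ(y) + y·σ(x))/(x+y). -/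
theorem stmt_2 (σ : ℝ → ℝ) (hC2 : ContDiff ℝ 2 σ)
    (hconv : ConvexOn ℝ (Set.Ici 0) σ)
    (hnonneg : ∀ x ∈ Set.Ici (0:ℝ), 0 ≤ σ x)
    (h0 : σ 0 = 0) (h0' : deriv σ 0 = 0)
    (hconc : ConcaveOn ℝ (Set.Ici 0) (deriv σ)) :
    ∀ x > (0:ℝ), ∀ y > (0:ℝ),
      0 ≤ σ (x + y) - σ x - σ y ∧
      σ (x + y) - σ x - σ y ≤ 2 * (x * σ y + y * σ x) / (x + y) := by
  intro x hx y hy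
  set φ := deriv σ with hφdef
  have hσd : Differentiable ℝ σ := hC2.differentiable (by norm_num)
  have hφ0 : φ 0 = 0 := h0'
  -- subadditivity of φ on positives
  have key : ∀ a b : ℝ, 0 < a → 0 < b → φ (a + b) ≤ φ a + φ b := by
    intro a b ha hb
    have hab : (0:ℝ) < a + b := by linarith
    have h1 := hconc.2 (Set.mem_Ici.mpr hab.le) (Set.mem_Ici.mpr le_rfl)
      (div_nonneg ha.le hab.le) (div_nonneg hb.le hab.le)
      (by field_simp; try ring)
    have h2 := hconc.2 (Set.mem_Ici.mpr hab.le) (Set.mem_Ici.mpr le_rfl)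
      (div_nonneg hb.le hab.le) (div_nonneg ha.le hab.le)
      (by field_simp; try ring)
    simp only [smul_eq_mul, mul_zero, add_zero, hφ0] at h1 h2
    have e1 : a/(a+b)*(a+b) = a := by field_simp
    have e2 : b/(a+b)*(a+b) = b := by field_simp
    rw [e1] at h1
    rw [e2] at h2
    rw [div_mul_eq_mul_div, div_le_iff₀ hab] at h1 h2
    nlinarith [h1, h2]
  -- superadditivity of σ
  have hsuper : σ x + σ y ≤ σ (x + y) := by
    have hab : (0:ℝ) < x + y := by linarith
    have h1 := hconv.2 (Set.mem_Ici.mpr hab.le) (Set.mem_Ici.mpr le_rfl)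
      (div_nonneg hx.le hab.le) (div_nonneg hy.le hab.le) (by field_simp; try ring)
    have h2 := hconv.2 (Set.mem_Ici.mpr hab.le) (Set.mem_Ici.mpr le_rfl)
      (div_nonneg hy.le hab.le) (div_nonneg hx.le hab.le) (by field_simp; try ring)
    simp only [smul_eq_mul, mul_zero, add_zero, h0] at h1 h2
    have e1 : x/(x+y)*(x+y) = x := by field_simp
    have e2 : y/(x+y)*(x+y) = y := by field_simp
    rw [e1] at h1
    rw [e2] at h2
    rw [div_mul_eq_mul_div, le_div_iff₀ hab] at h1 h2
    nlinarith [h1, h2]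
  -- D ≤ b * φ a
  have hDle : ∀ a b : ℝ, 0 < a → 0 < b → σ (a + b) - σ a - σ b ≤ b * φ a := by
    intro a b ha hb
    set g : ℝ → ℝ := fun t => σ (a + t) - σ t - t * φ a with hg
    have hgd : ∀ t : ℝ, HasDerivAt g (φ (a + t) - φ t - φ a) t := by
      intro t
      have h1 : HasDerivAt (fun t => σ (a + t)) (φ (a + t)) t := by
        have := (hσd (a + t)).hasDerivAt.comp t ((hasDerivAt_id t).const_add a)
        rw [mul_one] at this
        exact this
      exact (h1.sub (hσd t).hasDerivAt).sub
        (by simpa using (hasDerivAt_id t).mul_const (φ a))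
    have hanti : AntitoneOn g (Set.Ici 0) := by
      apply antitoneOn_of_deriv_nonpos (convex_Ici 0)
      · exact Continuous.continuousOn (by
          exact ((hσd.continuous.comp (continuous_const.add continuous_id)).sub
            hσd.continuous).sub (continuous_id.mul continuous_const))
      · intro t ht
        exact (hgd t).differentiableAt.differentiableWithinAt
      · intro t ht
        rw [interior_Ici] at ht
        rw [(hgd t).deriv]
        have := key a t ha ht
        linarith
    have := hanti (Set.mem_Ici.mpr le_rfl) (Set.mem_Ici.mpr hb.le) hb.le
    simp only [hg, add_zero, h0, sub_zero, zero_mul, sub_zero] at this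
    linarith
  -- a * φ a ≤ 2 σ a
  have hphi_le : ∀ a : ℝ, 0 < a → a * φ a ≤ 2 * σ a := by
    intro a ha
    set h : ℝ → ℝ := fun t => σ t - t^2 * (φ a / (2*a)) with hh
    have hhd : ∀ t : ℝ, HasDerivAt h (φ t - 2*t * (φ a / (2*a))) t := by
      intro t
      have h2 : HasDerivAt (fun t : ℝ => t^2 * (φ a / (2*a))) (2*t * (φ a / (2*a))) t := by
        have := (hasDerivAt_pow 2 t).mul_const (φ a / (2*a))
        simpa [mul_comm] using this
      exact (hσd t).hasDerivAt.sub h2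
    have hmono : MonotoneOn h (Set.Icc 0 a) := by
      apply monotoneOn_of_deriv_nonneg (convex_Icc 0 a)
      · exact Continuous.continuousOn (by
          exact hσd.continuous.sub ((continuous_pow 2).mul continuous_const))
      · intro t ht
        exact (hhd t).differentiableAt.differentiableWithinAt
      · intro t ht
        rw [interior_Icc] at ht
        obtain ⟨ht0, hta⟩ := ht
        rw [(hhd t).deriv]
        have hc := hconc.2 (Set.mem_Ici.mpr ha.le) (Set.mem_Ici.mpr le_rfl)
          (div_nonneg ht0.le ha.le)
          (show (0:ℝ) ≤ 1 - t/a by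
            have : t / a ≤ 1 := (div_le_one ha).mpr hta.le
            linarith)
          (by ring)
        simp only [smul_eq_mul, mul_zero, add_zero, hφ0] at hc
        have e1 : t/a*a = t := by field_simp
        rw [e1] at hc
        have e2 : 2*t * (φ a / (2*a)) = t/a * φ a := by field_simp
        rw [e2]
        linarith
    have hle := hmono (Set.mem_Icc.mpr ⟨le_rfl, ha.le⟩) (Set.mem_Icc.mpr ⟨ha.le, le_rfl⟩) ha.le
    simp only [hh, h0] at hle
    have e : a^2 * (φ a / (2*a)) = a * φ a / 2 := by field_simp
    rw [e] at hle
    -- hle : 0 - 0 ≤ σ a - a * φ a / 2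
    nlinarith [hle]
  constructor
  · linarith
  · have hxy : (0:ℝ) < x + y := by linarith
    rw [le_div_iff₀ hxy]
    have d1 := hDle x y hx hy
    have d2 := hDle y x hy hx
    rw [add_comm y x] at d2
    have p1 := hphi_le x hx
    have p2 := hphi_le y hy
    nlinarith [mul_le_mul_of_nonneg_left d1 hx.le, mul_le_mul_of_nonneg_left d2 hy.le,
      mul_le_mul_of_nonneg_left p1 hy.le, mul_le_mul_of_nonneg_left p2 hx.le]
end
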